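/- Let G be a finite simple graph in which every vertex has degree at least 1, let M be its row-normalized adjacency matrix over ℝ, and let u ≠ v be vertices in the same connected component. For an integer L ≥ dist(u,v), let N_L be the number of walks of length L from u to v, and (assuming N_L > 0) let D_L = min over all such walks W of (∏_{i=0}^{L-1} deg(W_i))^{1/L}, the minimum degree geometric mean over length-L walks from u to v. Then (M^L)_{u,v} ≤ N_L / (D_L)^{dist(u,v)}. (Finite-depth version of the decaying node-influence bound of Theorem 1 for an L-layer linear GCN.) -/

import Mathlib

open SimpleGraph

/-- Degree geometric mean of a walk. -/
noncomputable def pathGM {V : Type*} [Fintype V] (G : SimpleGraph V) [DecidableRel G.Adj]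
    {u v : V} (p : G.Walk u v) : ℝ :=
  ((p.support.dropLast.map fun w => ((G.degree w : ℝ))).prod) ^ ((p.length : ℝ)⁻¹)

/-- The row-normalized adjacency matrix `D⁻¹A` of a graph. -/
noncomputable def rowNormAdj {V : Type*} [Fintype V] (G : SimpleGraph V) [DecidableRel G.Adj] :
    Matrix V V ℝ :=
  fun a b => if G.Adj a b then ((G.degree a : ℝ))⁻¹ else 0

lemma walk_sum {V : Type*} [Fintype V] [DecidableEq V] (G : SimpleGraph V) [DecidableRel G.Adj]
    (L : ℕ) (u v : V) :
    (rowNormAdj G ^ L) u v =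
      ∑ p ∈ G.finsetWalkLength L u v,
        ((p.support.dropLast.map fun w => ((G.degree w : ℝ))⁻¹).prod) := by
  induction' L with n ih generalizing u v
  · obtain rfl | h := eq_or_ne u v <;>
      simp [finsetWalkLength, Matrix.one_apply, *]
  · rw [pow_succ', Matrix.mul_apply]
    simp only [ih, finsetWalkLength]
    rw [Finset.sum_biUnion]
    · simp only [Finset.sum_map, Function.Embedding.coeFn_mk]
      have hstep : ∀ (w : G.neighborSet u) (p : G.Walk (w : V) v),
          (((Walk.cons w.property p).support.dropLast.map
            fun x => ((G.degree x : ℝ))⁻¹).prod)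
          = ((G.degree u : ℝ))⁻¹ * ((p.support.dropLast.map fun x => ((G.degree x : ℝ))⁻¹).prod) := by
        intro w p
        have key : ∀ (b : V) (h : G.Adj u b) (q : G.Walk b v),
            (((Walk.cons h q).support.dropLast.map fun x => ((G.degree x : ℝ))⁻¹).prod)
            = ((G.degree u : ℝ))⁻¹ * ((q.support.dropLast.map fun x => ((G.degree x : ℝ))⁻¹).prod) := by
          intro b h q
          rw [Walk.support_cons, List.dropLast_cons_of_ne_nil q.support_ne_nil, List.map_cons,
            List.prod_cons]
        exact key _ w.property p
      have : ∀ w : V, rowNormAdj G u w * ∑ p ∈ G.finsetWalkLength n w v,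
            ((p.support.dropLast.map fun x => ((G.degree x : ℝ))⁻¹).prod)
          = if w ∈ G.neighborFinset u then
              ∑ p ∈ G.finsetWalkLength n w v,
                ((G.degree u : ℝ))⁻¹ * ((p.support.dropLast.map fun x => ((G.degree x : ℝ))⁻¹).prod)
            else 0 := by
        intro w
        by_cases h : G.Adj u w <;> simp [rowNormAdj, h, Finset.mul_sum]
      rw [Finset.sum_congr rfl fun w _ => this w, Finset.sum_ite_mem, Finset.univ_inter,
        Finset.sum_subtype (p := fun x => x ∈ G.neighborSet u) (G.neighborFinset u)
          (fun x => by simp [SimpleGraph.mem_neighborFinset, SimpleGraph.mem_neighborSet])]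
      apply Finset.sum_congr rfl
      intro w _
      apply Finset.sum_congr rfl
      intro p _
      exact (hstep w p).symm
    · rintro ⟨x, hx⟩ - ⟨y, hy⟩ - hxy
      rw [Function.onFun, disjoint_iff_inf_le]
      intro p hp
      simp only [Finset.inf_eq_inter, Finset.mem_inter, Finset.mem_map,
        Function.Embedding.coeFn_mk] at hp
      obtain ⟨⟨px, _, rfl⟩, ⟨py, hpy, hp⟩⟩ := hp
      cases hp
      simp at hxy

theorem stmt6 {V : Type*} [Fintype V] [DecidableEq V] (G : SimpleGraph V) [DecidableRel G.Adj]
    (hdeg : ∀ w : V, 1 ≤ G.degree w) (u v : V) (hne : u ≠ v) (hreach : G.Reachable u v)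
    (L : ℕ) (hL : G.dist u v ≤ L)
    (hN : 0 < Fintype.card {q : G.Walk u v // q.length = L}) :
    (rowNormAdj G ^ L) u v ≤
      (Fintype.card {q : G.Walk u v // q.length = L} : ℝ) /
        (⨅ p : {q : G.Walk u v // q.length = L}, pathGM G p.val) ^ (G.dist u v) := by
  have hdpos : 0 < G.dist u v := hreach.pos_dist_of_ne hne
  have hLpos : 0 < L := lt_of_lt_of_le hdpos hL
  have hnonempty : Nonempty {q : G.Walk u v // q.length = L} := Fintype.card_pos_iff.mp hN
  set D := ⨅ p : {q : G.Walk u v // q.length = L}, pathGM G p.val with hD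
  -- degree products
  have hP1 : ∀ p : {q : G.Walk u v // q.length = L},
      1 ≤ ((p.1.support.dropLast.map fun w => ((G.degree w : ℝ))).prod) := by
    intro p
    apply List.one_le_prod
    intro x hx
    simp only [List.mem_map] at hx
    obtain ⟨w, _, rfl⟩ := hx
    exact_mod_cast hdeg w
  have hGM1 : ∀ p : {q : G.Walk u v // q.length = L}, 1 ≤ pathGM G p.1 := by
    intro p
    exact Real.one_le_rpow (hP1 p) (by positivity)
  have hGMpow : ∀ p : {q : G.Walk u v // q.length = L},
      (pathGM G p.1) ^ L = ((p.1.support.dropLast.map fun w => ((G.degree w : ℝ))).prod) := by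
    intro p
    rw [pathGM, p.2, ← Real.rpow_natCast _ L, ← Real.rpow_mul (le_trans zero_le_one (hP1 p)),
      inv_mul_cancel₀ (by exact_mod_cast hLpos.ne'), Real.rpow_one]
  have hD1 : 1 ≤ D := le_ciInf hGM1
  have hDpos : 0 < D := lt_of_lt_of_le one_pos hD1
  have hDle : ∀ p : {q : G.Walk u v // q.length = L}, D ≤ pathGM G p.1 := fun p =>
    ciInf_le (Set.Finite.bddBelow (Set.finite_range _)) p
  have hkey : ∀ p : {q : G.Walk u v // q.length = L},
      D ^ (G.dist u v) ≤ ((p.1.support.dropLast.map fun w => ((G.degree w : ℝ))).prod) := by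
    intro p
    calc D ^ (G.dist u v) ≤ (pathGM G p.1) ^ (G.dist u v) :=
          pow_le_pow_left₀ hDpos.le (hDle p) _
      _ ≤ (pathGM G p.1) ^ L := pow_le_pow_right₀ (hGM1 p) hL
      _ = _ := hGMpow p
  rw [walk_sum, Finset.sum_subtype (p := fun q : G.Walk u v => q.length = L)
    (G.finsetWalkLength L u v) (fun q => SimpleGraph.mem_finsetWalkLength_iff)]
  have hterm : ∀ p : {q : G.Walk u v // q.length = L},
      ((p.1.support.dropLast.map fun w => ((G.degree w : ℝ))⁻¹).prod) ≤ (D ^ (G.dist u v))⁻¹ := by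
    intro p
    have : ((p.1.support.dropLast.map fun w => ((G.degree w : ℝ))⁻¹).prod)
        = ((p.1.support.dropLast.map fun w => ((G.degree w : ℝ))).prod)⁻¹ := by
      induction p.1.support.dropLast with
      | nil => simp
      | cons a l ih => simp only [List.map_cons, List.prod_cons, ih, mul_inv]
    rw [this]
    exact inv_anti₀ (pow_pos hDpos _) (hkey p)
  calc (∑ p : {q : G.Walk u v // q.length = L},
        ((p.1.support.dropLast.map fun w => ((G.degree w : ℝ))⁻¹).prod))
      ≤ ∑ _p : {q : G.Walk u v // q.length = L}, (D ^ (G.dist u v))⁻¹ :=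
        Finset.sum_le_sum fun p _ => hterm p
    _ = (Fintype.card {q : G.Walk u v // q.length = L} : ℝ) / D ^ (G.dist u v) := by
        rw [Finset.sum_const, Finset.card_univ, nsmul_eq_mul, div_eq_mul_inv]
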